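/- arXiv:2202.10296 — 2 statements merged into one kernel-verified Lean document; each statement's English description precedes it below -/
import Mathlib

section
/- Let X have support {0,1,2} with p_i = P(X=i) > 0 for i = 0,1,2 and let Δ = p_1² − 4p_0p_2. Then ρ(X) = (1 + (p_1 − √(max(Δ,0)))/(2p_2))^{-1}; in particular if p_0 = p_1 = p_2 = 1/3 then ρ(X) = 2/3. -/
open scoped BigOperators

/-- `IsPMF p` : `p` is a probability mass function on `ℕ`. -/
def IsPMF (p : ℕ → ℝ) : Prop :=
  (∀ n, 0 ≤ p n) ∧ HasSum p 1

/-- Binomial `α`-thinning at the level of distributions: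
`thin α p k = P(α ∘ X = k)` when `X` has pmf `p`. -/
noncomputable def thin (α : ℝ) (p : ℕ → ℝ) (k : ℕ) : ℝ :=
  ∑' n : ℕ, (n.choose k : ℝ) * α ^ k * (1 - α) ^ (n - k) * p n

/-- Convolution of two pmfs on `ℕ` (law of the sum of independent variables). -/
noncomputable def conv (p q : ℕ → ℝ) (n : ℕ) : ℝ :=
  ∑ k ∈ Finset.range (n + 1), p k * q (n - k)

/-- `MemM α p` : the distribution `p` is an `α`-thinned distribution, i.e. `p ∈ M_α`. -/
def MemM (α : ℝ) (p : ℕ → ℝ) : Prop :=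
  ∃ q : ℕ → ℝ, IsPMF q ∧ ∀ k, p k = thin α q k

/-- `rho p` : the minimal thinning parameter `ρ(X)`. -/
noncomputable def rho (p : ℕ → ℝ) : ℝ :=
  sInf {α : ℝ | α ∈ Set.Icc (0:ℝ) 1 ∧ MemM α p}

lemma binom_term_le_one {α : ℝ} (h0 : 0 ≤ α) (h1 : α ≤ 1) (n k : ℕ) :
    (n.choose k : ℝ) * α ^ k * (1 - α) ^ (n - k) ≤ 1 := by
  rcases le_or_gt k n with hk | hk
  · have hsum : ∑ j ∈ Finset.range (n + 1),
        α ^ j * (1 - α) ^ (n - j) * (n.choose j : ℝ) = 1 := by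
      rw [← add_pow]; simp
    calc (n.choose k : ℝ) * α ^ k * (1 - α) ^ (n - k)
        = α ^ k * (1 - α) ^ (n - k) * (n.choose k : ℝ) := by ring
      _ ≤ ∑ j ∈ Finset.range (n + 1), α ^ j * (1 - α) ^ (n - j) * (n.choose j : ℝ) := by
          apply Finset.single_le_sum (f := fun j => α ^ j * (1 - α) ^ (n - j) * (n.choose j : ℝ))
          · intro j _
            have : (0:ℝ) ≤ 1 - α := by linarith
            positivity
          · exact Finset.mem_range.2 (Nat.lt_succ_of_le hk)
      _ = 1 := hsum
  · simp [Nat.choose_eq_zero_of_lt hk]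

lemma binom_term_nonneg {α : ℝ} (h0 : 0 ≤ α) (h1 : α ≤ 1) (n k : ℕ) {q : ℕ → ℝ}
    (hq : 0 ≤ q n) :
    0 ≤ (n.choose k : ℝ) * α ^ k * (1 - α) ^ (n - k) * q n := by
  have h1' : (0:ℝ) ≤ 1 - α := by linarith
  positivity

lemma thin_summable {α : ℝ} (h0 : 0 ≤ α) (h1 : α ≤ 1) {q : ℕ → ℝ}
    (hq0 : ∀ n, 0 ≤ q n) (hq : Summable q) (k : ℕ) :
    Summable (fun n => (n.choose k : ℝ) * α ^ k * (1 - α) ^ (n - k) * q n) := by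
  apply Summable.of_nonneg_of_le (fun n => binom_term_nonneg h0 h1 n k (hq0 n)) _ hq
  intro n
  calc (n.choose k : ℝ) * α ^ k * (1 - α) ^ (n - k) * q n
      ≤ 1 * q n :=
        mul_le_mul_of_nonneg_right (binom_term_le_one h0 h1 n k) (hq0 n)
    _ = q n := one_mul _

lemma alg_forward (p1 p2 s d α : ℝ) (h1 : 0 < p1) (h2 : 0 < p2)
    (hs : s = p1 + 2 * p2) (hd0 : 0 ≤ d) (hd2 : d ^ 2 = max (s ^ 2 - 4 * p2) 0)
    (hα : 0 < α)
    (hA : 2 * p2 ≤ α * s) (hB : 0 ≤ α ^ 2 - s * α + p2) :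
    2 * p2 ≤ α * (s - d) := by
  have hspos : 0 < s := by nlinarith
  rcases le_or_gt (s ^ 2 - 4 * p2) 0 with hd' | hd'
  · have : d ^ 2 = 0 := by rw [hd2, max_eq_right hd']
    have hd : d = 0 := by nlinarith
    rw [hd]; linarith
  · have hd2' : d ^ 2 = s ^ 2 - 4 * p2 := by rw [hd2, max_eq_left hd'.le]
    have hds : d < s := by nlinarith
    rcases le_or_gt ((s + d) / 2) α with h | h
    · nlinarith
    · have hle : α ≤ (s - d) / 2 := by nlinarith
      have hdz : d = 0 := by nlinarith
      rw [hdz]; linarith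

lemma alg_backward (p1 p2 s d α : ℝ) (h1 : 0 < p1) (h2 : 0 < p2)
    (hs : s = p1 + 2 * p2) (hd0 : 0 ≤ d) (hd2 : d ^ 2 = max (s ^ 2 - 4 * p2) 0)
    (hα : 0 < α)
    (hC : 2 * p2 ≤ α * (s - d)) :
    2 * p2 ≤ α * s ∧ 0 ≤ α ^ 2 - s * α + p2 := by
  have hspos : 0 < s := by nlinarith
  constructor
  · nlinarith
  · rcases le_or_gt (s ^ 2 - 4 * p2) 0 with hd' | hd'
    · nlinarith [sq_nonneg (α - s / 2)]
    · have hd2' : d ^ 2 = s ^ 2 - 4 * p2 := by rw [hd2, max_eq_left hd'.le]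
      have hds : d < s := by nlinarith
      have hge : (s + d) / 2 ≤ α := by
        have := mul_le_mul_of_nonneg_left hC (le_of_lt (by linarith : (0:ℝ) < s + d))
        nlinarith
      nlinarith

lemma memM_char (p : ℕ → ℝ)
    (h1 : 0 < p 1) (h2 : 0 < p 2)
    (hsupp : ∀ k, 2 < k → p k = 0)
    (hS : p 0 + p 1 + p 2 = 1)
    (α : ℝ) (hα : 0 < α) (hα1 : α ≤ 1) :
    MemM α p ↔ (2 * p 2 ≤ α * (p 1 + 2 * p 2) ∧
      0 ≤ α ^ 2 - (p 1 + 2 * p 2) * α + p 2) := by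
  constructor
  · rintro ⟨q, ⟨hqn, hqs⟩, hthin⟩
    have hsq : Summable q := hqs.summable
    have hle : ∀ n, α ^ n * q n ≤ p n := by
      intro n
      have h := Summable.le_tsum (thin_summable hα.le hα1 hqn hsq n) n
        (fun m _ => binom_term_nonneg hα.le hα1 m n (hqn m))
      rw [hthin n, thin]
      simpa using h
    have hzero : ∀ n ∉ Finset.range 3, q n = 0 := by
      intro n hn
      have hn3 : 2 < n := by simp at hn; omega
      have hpn := hsupp n hn3
      have := hle n
      rw [hpn] at this
      nlinarith [pow_pos hα n, hqn n]
    have hfin : ∀ k, p k = ∑ n ∈ Finset.range 3,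
        (n.choose k : ℝ) * α ^ k * (1 - α) ^ (n - k) * q n := by
      intro k
      rw [hthin k, thin, tsum_eq_sum]
      intro n hn
      simp [hzero n hn]
    have E0 : p 0 = q 0 + (1 - α) * q 1 + (1 - α)^2 * q 2 := by
      rw [hfin 0]
      simp [Finset.sum_range_succ]
    have E1 : p 1 = α * q 1 + 2 * α * (1 - α) * q 2 := by
      rw [hfin 1]
      simp [Finset.sum_range_succ]
    have E2 : p 2 = α ^ 2 * q 2 := by
      rw [hfin 2]
      simp [Finset.sum_range_succ]
    constructor
    · have key1 : α * (p 1 + 2 * p 2) - 2 * p 2 = α ^ 2 * q 1 := by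
        linear_combination α * E1 + (2 * α - 2) * E2
      nlinarith [mul_nonneg (mul_nonneg hα.le hα.le) (hqn 1)]
    · have key0 : α ^ 2 - (p 1 + 2 * p 2) * α + p 2 = α ^ 2 * q 0 := by
        linear_combination (-α^2) * hS + α^2 * E0 + (α^2 - α) * E1 + (1 - α)^2 * E2
      nlinarith [mul_nonneg (mul_nonneg hα.le hα.le) (hqn 0)]
  · rintro ⟨hA, hB⟩
    have hα2 : (0:ℝ) < α ^ 2 := by positivity
    set q : ℕ → ℝ := fun n => match n with
      | 0 => (α ^ 2 * p 0 - α * (1 - α) * p 1 + (1 - α) ^ 2 * p 2) / α ^ 2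
      | 1 => (α * p 1 - 2 * (1 - α) * p 2) / α ^ 2
      | 2 => p 2 / α ^ 2
      | _ => 0 with hqdef
    have hg : α ^ 2 * p 0 - α * (1 - α) * p 1 + (1 - α) ^ 2 * p 2
        = α ^ 2 - (p 1 + 2 * p 2) * α + p 2 := by
      linear_combination α ^ 2 * hS
    have hzero : ∀ n ∉ Finset.range 3, q n = 0 := by
      intro n hn
      have hn3 : 2 < n := by simp at hn; omega
      obtain ⟨m, rfl⟩ : ∃ m, n = m + 3 := ⟨n - 3, by omega⟩
      rfl
    refine ⟨q, ⟨?_, ?_⟩, ?_⟩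
    · intro n
      match n with
      | 0 =>
        apply div_nonneg _ hα2.le
        rw [hg]; exact hB
      | 1 =>
        apply div_nonneg _ hα2.le
        linarith
      | 2 => exact div_nonneg h2.le hα2.le
      | (m+3) => exact le_refl 0
    · have h3 := hasSum_sum_of_ne_finset_zero (s := Finset.range 3) (f := q) (L := SummationFilter.unconditional ℕ) hzero
      have hsum1 : ∑ n ∈ Finset.range 3, q n = 1 := by
        simp only [Finset.sum_range_succ, Finset.sum_range_zero, zero_add, hqdef]
        field_simp
        linear_combination α ^ 2 * hS
      rwa [hsum1] at h3
    · intro k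
      rw [thin, tsum_eq_sum (s := Finset.range 3) (fun n hn => by simp [hzero n hn])]
      match k with
      | 0 =>
        simp only [Finset.sum_range_succ, Finset.sum_range_zero, zero_add, hqdef]
        norm_num
        field_simp
        ring
      | 1 =>
        simp only [Finset.sum_range_succ, Finset.sum_range_zero, zero_add, hqdef]
        norm_num
        field_simp
        ring
      | 2 =>
        simp only [Finset.sum_range_succ, Finset.sum_range_zero, zero_add, hqdef]
        norm_num
        field_simp
      | (m+3) =>
        rw [hsupp (m+3) (by omega)]
        apply (Finset.sum_eq_zero _).symm
        intro n hn
        have : n < 3 := Finset.mem_range.1 hn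
        rw [Nat.choose_eq_zero_of_lt (by omega)]
        simp

/-- for `X` with support `{0,1,2}` and `Δ = p₁² − 4p₀p₂`,
`ρ(X) = (1 + (p₁ − √(Δ⁺))/(2p₂))⁻¹`; in particular `ρ(X) = 2/3` when all
`p_i = 1/3`. -/
theorem stmt_18 (p : ℕ → ℝ) (hp : IsPMF p)
    (h0 : 0 < p 0) (h1 : 0 < p 1) (h2 : 0 < p 2)
    (hsupp : ∀ k, 2 < k → p k = 0) :
    rho p = (1 + (p 1 - Real.sqrt (max (p 1 ^ 2 - 4 * p 0 * p 2) 0)) / (2 * p 2))⁻¹ ∧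
    (p 0 = 1 / 3 → p 1 = 1 / 3 → p 2 = 1 / 3 → rho p = 2 / 3) := by
  obtain ⟨hpn, hps⟩ := hp
  have hS : p 0 + p 1 + p 2 = 1 := by
    have h3 := hasSum_sum_of_ne_finset_zero (s := Finset.range 3) (f := p) (L := SummationFilter.unconditional ℕ)
      (fun n hn => hsupp n (by simp at hn; omega))
    have h4 := h3.unique hps
    simpa [Finset.sum_range_succ] using h4
  set d := Real.sqrt (max (p 1 ^ 2 - 4 * p 0 * p 2) 0) with hd
  have hd0 : 0 ≤ d := Real.sqrt_nonneg _
  have hd2' : d ^ 2 = max (p 1 ^ 2 - 4 * p 0 * p 2) 0 :=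
    Real.sq_sqrt (le_max_right _ _)
  have hdelta : p 1 ^ 2 - 4 * p 0 * p 2 = (p 1 + 2 * p 2) ^ 2 - 4 * p 2 := by
    linear_combination (-(4 * p 2)) * hS
  have hd2 : d ^ 2 = max ((p 1 + 2 * p 2) ^ 2 - 4 * p 2) 0 := by
    rw [hd2', hdelta]
  have hdp1 : d ≤ p 1 := by
    have hle : d ^ 2 ≤ p 1 ^ 2 := by
      rw [hd2']
      apply max_le
      · nlinarith
      · positivity
    nlinarith
  have hsd : 0 < p 1 + 2 * p 2 - d := by linarith
  set A := 2 * p 2 / (p 1 + 2 * p 2 - d) with hA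
  have hApos : 0 < A := div_pos (by linarith) hsd
  have hA1 : A ≤ 1 := by rw [hA, div_le_one hsd]; linarith
  have hAeq : (1 + (p 1 - d) / (2 * p 2))⁻¹ = A := by
    have e : 1 + (p 1 - d) / (2 * p 2) = (p 1 + 2 * p 2 - d) / (2 * p 2) := by
      field_simp
      ring
    rw [e, inv_div]
  have hset : {α : ℝ | α ∈ Set.Icc (0:ℝ) 1 ∧ MemM α p} = Set.Icc A 1 := by
    ext x
    simp only [Set.mem_setOf_eq, Set.mem_Icc]
    constructor
    · rintro ⟨⟨hx0, hx1⟩, hm⟩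
      have hxpos : 0 < x := by
        rcases hx0.lt_or_eq with h | h
        · exact h
        · exfalso
          obtain ⟨q, hq, hthin⟩ := hm
          have hth := hthin 1
          rw [← h] at hth
          simp [thin] at hth
          linarith
      obtain ⟨hA', hB'⟩ := (memM_char p h1 h2 hsupp hS x hxpos hx1).1 hm
      have hkey := alg_forward (p 1) (p 2) _ d x h1 h2 rfl hd0 hd2 hxpos hA' hB'
      exact ⟨(div_le_iff₀ hsd).2 (by linarith), hx1⟩
    · rintro ⟨hxA, hx1⟩
      have hxpos : 0 < x := lt_of_lt_of_le hApos hxA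
      have hC : 2 * p 2 ≤ x * (p 1 + 2 * p 2 - d) := by
        have := (div_le_iff₀ hsd).1 hxA
        linarith
      obtain ⟨hA', hB'⟩ := alg_backward (p 1) (p 2) _ d x h1 h2 rfl hd0 hd2 hxpos hC
      exact ⟨⟨hxpos.le, hx1⟩, (memM_char p h1 h2 hsupp hS x hxpos hx1).2 ⟨hA', hB'⟩⟩
  have hrho : rho p = A := by
    rw [rho, hset, csInf_Icc hA1]
  constructor
  · rw [hrho]; exact hAeq.symm
  · intro e0 e1 e2
    rw [hrho, hA, hd, e0, e1, e2]
    rw [show max ((1/3:ℝ) ^ 2 - 4 * (1/3) * (1/3)) 0 = 0 from max_eq_right (by norm_num)]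
    rw [Real.sqrt_zero]
    norm_num
end

section
/- Let W be a nonnegative random variable and n ≥ 1. The function s ↦ E[(1 − sW)^n] is the alternate probability generating function of some random variable supported on {0,...,n} (i.e., equals Σ_{k=0}^n (1−s)^k q_k for a probability vector q) if and only if E[W^n] < ∞ and E[W^k (1−W)^{n−k}] ≥ 0 for every k ∈ {0,...,n} with n−k odd; in that case q_k = C(n,k)·E[W^k(1−W)^{n−k}]. Moreover, if these conditions hold for n, they also hold for n−1. -/
open scoped BigOperators

section StmtNineteenAux
open MeasureTheory Finset

lemma binom_id (n : ℕ) (s w : ℝ) :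
    (1 - s * w) ^ n =
      ∑ k ∈ range (n + 1), (1 - s) ^ k * ((n.choose k : ℝ) * (w ^ k * (1 - w) ^ (n - k))) := by
  have h : (1 : ℝ) - s * w = (1 - s) * w + (1 - w) := by ring
  rw [h, add_pow]
  exact Finset.sum_congr rfl fun k _ => by rw [mul_pow]; ring

lemma pow_bound (n k m : ℕ) (hkm : k + m ≤ n) (w : ℝ) :
    |w ^ k * (1 - w) ^ m| ≤ 2 ^ n * (1 + |w| ^ n) := by
  set M := max 1 |w| with hM
  have h1 : (1:ℝ) ≤ M := le_max_left _ _
  have h0 : (0:ℝ) ≤ M := by linarith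
  have hw : |w| ≤ M := le_max_right _ _
  have h2 : |1 - w| ≤ 2 * M := by
    calc |1 - w| = |1 + (-w)| := by ring_nf
    _ ≤ |(1:ℝ)| + |(-w)| := abs_add_le _ _
    _ = 1 + |w| := by rw [abs_one, abs_neg]
    _ ≤ 2 * M := by linarith
  have hMn : M ^ n ≤ 1 + |w| ^ n := by
    rcases max_cases 1 |w| with ⟨h, _⟩ | ⟨h, _⟩ <;> rw [hM, h]
    · have : (0:ℝ) ≤ |w| ^ n := pow_nonneg (abs_nonneg _) _
      rw [one_pow]; linarith
    · have : (0:ℝ) ≤ (1:ℝ) := zero_le_one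
      linarith
  calc |w ^ k * (1 - w) ^ m| = |w| ^ k * |1 - w| ^ m := by
        rw [abs_mul, abs_pow, abs_pow]
    _ ≤ M ^ k * (2 * M) ^ m := by
        gcongr <;> first | exact abs_nonneg _ | exact hw | exact h2
    _ = 2 ^ m * M ^ (k + m) := by rw [mul_pow, pow_add]; ring
    _ ≤ 2 ^ n * M ^ n := by
        gcongr
        · norm_num
        · exact le_trans (Nat.le_add_left m k) hkm
    _ ≤ 2 ^ n * (1 + |w| ^ n) := by
        have : (0:ℝ) ≤ 2 ^ n := by positivity
        nlinarith

lemma integrable_pow_mul {μ : Measure ℝ} [IsProbabilityMeasure μ]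
    {n : ℕ} (h : Integrable (fun w => w ^ n) μ) (k m : ℕ) (hkm : k + m ≤ n) :
    Integrable (fun w => w ^ k * (1 - w) ^ m) μ := by
  have hg : Integrable (fun w : ℝ => (2:ℝ) ^ n * (1 + |w ^ n|)) μ :=
    ((integrable_const (1:ℝ)).add h.abs).const_mul _
  refine hg.mono' ?_ ?_
  · exact ((continuous_pow k).mul ((continuous_const.sub continuous_id).pow m)).aestronglyMeasurable
  · filter_upwards with w
    rw [Real.norm_eq_abs]
    simpa [abs_pow] using pow_bound n k m hkm w

lemma integrable_of_apgf {μ : Measure ℝ} [IsProbabilityMeasure μ] (n : ℕ) {s : ℝ} (hs : s ≠ 0)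
    (h : Integrable (fun w => (1 - s * w) ^ n) μ) : Integrable (fun w => w ^ n) μ := by
  have hg : Integrable (fun w : ℝ => (2 / |s|) ^ n * (1 + |(1 - s * w) ^ n|)) μ :=
    ((integrable_const (1:ℝ)).add h.abs).const_mul _
  refine hg.mono' (continuous_pow n).aestronglyMeasurable ?_
  filter_upwards with w
  rw [Real.norm_eq_abs, abs_pow]
  have hs' : (0:ℝ) < |s| := abs_pos.2 hs
  set M := max 1 |1 - s * w| with hM
  have h1 : (1:ℝ) ≤ M := le_max_left _ _
  have h0 : (0:ℝ) ≤ M := by linarith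
  have hw : |s| * |w| ≤ 2 * M := by
    have : |s * w| = |1 - (1 - s * w)| := by ring_nf
    calc |s| * |w| = |s * w| := (abs_mul s w).symm
    _ = |1 - (1 - s * w)| := this
    _ ≤ |(1:ℝ)| + |1 - s * w| := by
        calc |1 - (1 - s * w)| = |1 + (-(1 - s * w))| := by ring_nf
        _ ≤ |(1:ℝ)| + |(-(1 - s * w))| := abs_add_le _ _
        _ = |(1:ℝ)| + |1 - s * w| := by rw [abs_neg]
    _ ≤ 2 * M := by
        have : |1 - s * w| ≤ M := le_max_right _ _
        rw [abs_one]; linarith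
  have hw2 : |w| ≤ (2 / |s|) * M := by
    rw [div_mul_eq_mul_div, le_div_iff₀ hs']
    calc |w| * |s| = |s| * |w| := mul_comm _ _
    _ ≤ 2 * M := hw
  have hMn : M ^ n ≤ 1 + |1 - s * w| ^ n := by
    rcases max_cases 1 |1 - s * w| with ⟨hh, _⟩ | ⟨hh, _⟩ <;> rw [hM, hh]
    · have : (0:ℝ) ≤ |1 - s * w| ^ n := pow_nonneg (abs_nonneg _) _
      rw [one_pow]; linarith
    · linarith
  calc |w| ^ n ≤ ((2 / |s|) * M) ^ n := by
        gcongr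
    _ = (2 / |s|) ^ n * M ^ n := mul_pow _ _ _
    _ ≤ (2 / |s|) ^ n * (1 + |1 - s * w| ^ n) := by
        have : (0:ℝ) ≤ (2 / |s|) ^ n := by positivity
        nlinarith
    _ = (2 / |s|) ^ n * (1 + |(1 - s * w) ^ n|) := by rw [abs_pow]

lemma apgf_formula {μ : Measure ℝ} [IsProbabilityMeasure μ] {n : ℕ}
    (h : Integrable (fun w => w ^ n) μ) (s : ℝ) :
    (∫ w, (1 - s * w) ^ n ∂μ) =
      ∑ k ∈ range (n + 1), (1 - s) ^ k * ((n.choose k : ℝ) * ∫ w, w ^ k * (1 - w) ^ (n - k) ∂μ) := by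
  calc (∫ w, (1 - s * w) ^ n ∂μ)
      = ∫ w, ∑ k ∈ range (n + 1), (1 - s) ^ k * ((n.choose k : ℝ) * (w ^ k * (1 - w) ^ (n - k))) ∂μ := by
        apply integral_congr_ae
        filter_upwards with w
        exact binom_id n s w
    _ = ∑ k ∈ range (n + 1), ∫ w, (1 - s) ^ k * ((n.choose k : ℝ) * (w ^ k * (1 - w) ^ (n - k))) ∂μ := by
        apply integral_finset_sum
        intro k hk
        have hk' : k ≤ n := Nat.lt_succ_iff.mp (Finset.mem_range.mp hk)
        exact ((integrable_pow_mul h k (n - k) (by omega)).const_mul _).const_mul _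
    _ = ∑ k ∈ range (n + 1), (1 - s) ^ k * ((n.choose k : ℝ) * ∫ w, w ^ k * (1 - w) ^ (n - k) ∂μ) := by
        refine Finset.sum_congr rfl fun k _ => ?_
        rw [integral_const_mul, integral_const_mul]

lemma poly_zero {m : ℕ} {c : ℕ → ℝ} (S : Set ℝ) (hS : S.Infinite)
    (h : ∀ t ∈ S, ∑ k ∈ range m, t ^ k * c k = 0) : ∀ k < m, c k = 0 := by
  set p : Polynomial ℝ := ∑ k ∈ range m, Polynomial.C (c k) * Polynomial.X ^ k with hp
  have heval : ∀ t : ℝ, p.eval t = ∑ k ∈ range m, t ^ k * c k := by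
    intro t
    rw [hp, Polynomial.eval_finset_sum]
    exact Finset.sum_congr rfl fun k _ => by
      rw [Polynomial.eval_mul, Polynomial.eval_C, Polynomial.eval_pow, Polynomial.eval_X, mul_comm]
  have hp0 : p = 0 := by
    apply Polynomial.eq_zero_of_infinite_isRoot
    apply hS.mono
    intro t ht
    simp only [Set.mem_setOf_eq, Polynomial.IsRoot, heval]
    exact h t ht
  intro k hk
  have hc : p.coeff k = c k := by
    rw [hp, Polynomial.finset_sum_coeff]
    have hterm : ∀ j ∈ range m, (Polynomial.C (c j) * Polynomial.X ^ j).coeff k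
        = if k = j then c j else 0 := fun j _ => by
      rw [Polynomial.coeff_C_mul, Polynomial.coeff_X_pow, mul_ite, mul_one, mul_zero]
    rw [Finset.sum_congr rfl hterm, Finset.sum_ite_eq (range m) k c, if_pos (Finset.mem_range.mpr hk)]
  rw [hp0] at hc
  simpa using hc.symm

lemma ae_nonneg' {μ : Measure ℝ} (hnn : μ (Set.Iio 0) = 0) : ∀ᵐ w ∂μ, 0 ≤ w := by
  have : {a : ℝ | ¬ 0 ≤ a} = Set.Iio 0 := by ext x; simp [not_le]
  rw [MeasureTheory.ae_iff, this]
  exact hnn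

lemma integral_nonneg_even {μ : Measure ℝ} (hae : ∀ᵐ w ∂μ, 0 ≤ w) (k m : ℕ) (hm : Even m) :
    0 ≤ ∫ w, w ^ k * (1 - w) ^ m ∂μ := by
  apply integral_nonneg_of_ae
  filter_upwards [hae] with w hw
  exact mul_nonneg (pow_nonneg hw k) (hm.pow_nonneg _)



/-- for a nonnegative random variable `W` and `n ≥ 1`,
`s ↦ E[(1−sW)^n]` is the a.p.g.f. of a distribution on `{0,…,n}` iff
`E[W^n] < ∞` and `E[W^k(1−W)^{n−k}] ≥ 0` for all `k` with `n−k` odd; in that case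
`q_k = C(n,k) E[W^k(1−W)^{n−k}]`, and the conditions for `n` imply those for `n−1`. -/
theorem stmt_19 (n : ℕ) (hn : 1 ≤ n) (μ : MeasureTheory.Measure ℝ)
    (hμ : MeasureTheory.IsProbabilityMeasure μ) (hnn : μ (Set.Iio 0) = 0) :
    ((∃ q : ℕ → ℝ, IsPMF q ∧ (∀ k, n < k → q k = 0) ∧
        ∀ s : ℝ, (∫ w, (1 - s * w) ^ n ∂μ) =
          ∑ k ∈ Finset.range (n + 1), (1 - s) ^ k * q k) ↔
      (MeasureTheory.Integrable (fun w => w ^ n) μ ∧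
        ∀ k ≤ n, Odd (n - k) → 0 ≤ ∫ w, w ^ k * (1 - w) ^ (n - k) ∂μ)) ∧
    ((MeasureTheory.Integrable (fun w => w ^ n) μ ∧
        ∀ k ≤ n, Odd (n - k) → 0 ≤ ∫ w, w ^ k * (1 - w) ^ (n - k) ∂μ) →
      ∀ s : ℝ, (∫ w, (1 - s * w) ^ n ∂μ) =
        ∑ k ∈ Finset.range (n + 1),
          (1 - s) ^ k * ((n.choose k : ℝ) * ∫ w, w ^ k * (1 - w) ^ (n - k) ∂μ)) ∧
    ((MeasureTheory.Integrable (fun w => w ^ n) μ ∧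
        ∀ k ≤ n, Odd (n - k) → 0 ≤ ∫ w, w ^ k * (1 - w) ^ (n - k) ∂μ) →
      (MeasureTheory.Integrable (fun w => w ^ (n - 1)) μ ∧
        ∀ k ≤ n - 1, Odd (n - 1 - k) → 0 ≤ ∫ w, w ^ k * (1 - w) ^ (n - 1 - k) ∂μ)) := by
  haveI := hμ
  have hae : ∀ᵐ w ∂μ, 0 ≤ w := ae_nonneg' hnn
  have part2 : (MeasureTheory.Integrable (fun w => w ^ n) μ ∧
        ∀ k ≤ n, Odd (n - k) → 0 ≤ ∫ w, w ^ k * (1 - w) ^ (n - k) ∂μ) →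
      ∀ s : ℝ, (∫ w, (1 - s * w) ^ n ∂μ) =
        ∑ k ∈ Finset.range (n + 1),
          (1 - s) ^ k * ((n.choose k : ℝ) * ∫ w, w ^ k * (1 - w) ^ (n - k) ∂μ) :=
    fun h s => apgf_formula h.1 s
  refine ⟨⟨?_, ?_⟩, part2, ?_⟩
  · -- forward direction
    rintro ⟨q, hq, hz, hfs⟩
    have hInt : MeasureTheory.Integrable (fun w => w ^ n) μ := by
      by_contra hni
      have hzero : ∀ s : ℝ, s ≠ 0 → ∑ k ∈ Finset.range (n + 1), (1 - s) ^ k * q k = 0 := by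
        intro s hs
        rw [← hfs s]
        exact integral_undef fun hI => hni (integrable_of_apgf n hs hI)
      have hq0 : ∀ k < n + 1, q k = 0 := by
        apply poly_zero ({(1:ℝ)}ᶜ) (Set.finite_singleton (1:ℝ)).infinite_compl
        intro t ht
        have ht1 : t ≠ 1 := fun h => ht (by simp [h])
        have hs : (1 : ℝ) - t ≠ 0 := fun h => ht1 (by linarith [sub_eq_zero.mp h])
        have := hzero (1 - t) hs
        simpa [show (1:ℝ) - (1 - t) = t from by ring] using this
      have hq00 : ∀ k, q k = 0 := fun k => by
        rcases le_or_gt k n with h | h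
        · exact hq0 k (by omega)
        · exact hz k h
      have : HasSum q 0 := by
        have : q = fun _ => (0:ℝ) := funext hq00
        rw [this]; exact hasSum_zero
      exact one_ne_zero (hq.2.unique this)
    refine ⟨hInt, fun k hk _ => ?_⟩
    have hcoeff : ∀ j < n + 1,
        q j - (n.choose j : ℝ) * (∫ w, w ^ j * (1 - w) ^ (n - j) ∂μ) = 0 := by
      apply poly_zero (Set.univ : Set ℝ) Set.infinite_univ
      intro t _
      have h1 := hfs (1 - t)
      have h2 := apgf_formula hInt (1 - t)
      rw [h2] at h1
      have h3 : (1:ℝ) - (1 - t) = t := by ring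
      rw [h3] at h1
      have : ∑ j ∈ Finset.range (n + 1), t ^ j *
          (q j - (n.choose j : ℝ) * ∫ w, w ^ j * (1 - w) ^ (n - j) ∂μ)
          = ∑ j ∈ Finset.range (n + 1), (t ^ j * q j
            - t ^ j * ((n.choose j : ℝ) * ∫ w, w ^ j * (1 - w) ^ (n - j) ∂μ)) :=
        Finset.sum_congr rfl fun j _ => by ring
      rw [this, Finset.sum_sub_distrib, sub_eq_zero]
      exact h1.symm
    have hqk := hcoeff k (by omega)
    have hCpos : (0:ℝ) < (n.choose k : ℝ) := by
      exact_mod_cast Nat.choose_pos hk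
    have hqnn := hq.1 k
    nlinarith [sub_eq_zero.mp (hqk)]
  · -- backward direction
    rintro ⟨hInt, hOdd⟩
    set m : ℕ → ℝ := fun k => ∫ w, w ^ k * (1 - w) ^ (n - k) ∂μ with hm
    set q : ℕ → ℝ := fun k => if k ≤ n then (n.choose k : ℝ) * m k else 0 with hqdef
    have hqval : ∀ k ∈ Finset.range (n + 1), q k = (n.choose k : ℝ) * m k := by
      intro k hk
      rw [hqdef]
      simp only [if_pos (Nat.lt_succ_iff.mp (Finset.mem_range.mp hk))]
    have hqnn : ∀ k, 0 ≤ q k := by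
      intro k
      rw [hqdef]
      dsimp only
      split_ifs with h
      · rcases Nat.even_or_odd (n - k) with he | ho
        · exact mul_nonneg (Nat.cast_nonneg _) (integral_nonneg_even hae k (n - k) he)
        · exact mul_nonneg (Nat.cast_nonneg _) (hOdd k h ho)
      · exact le_refl 0
    have hsum1 : ∑ k ∈ Finset.range (n + 1), q k = 1 := by
      have h0 := apgf_formula hInt 0
      simp only [zero_mul, sub_zero, one_pow, one_mul] at h0
      rw [MeasureTheory.integral_const] at h0
      simp only [measure_univ, ENNReal.toReal_one, smul_eq_mul, one_mul, probReal_univ, mul_one] at h0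
      calc ∑ k ∈ Finset.range (n + 1), q k
          = ∑ k ∈ Finset.range (n + 1), (n.choose k : ℝ) * m k := Finset.sum_congr rfl hqval
        _ = 1 := by simp only [hm]; exact h0.symm
    have hhs : HasSum q 1 := by
      have h1 : HasSum q (∑ k ∈ Finset.range (n + 1), q k) := by
        apply hasSum_sum_of_ne_finset_zero
        intro k hk
        rw [hqdef]
        simp only [if_neg (fun h : k ≤ n => hk (Finset.mem_range.mpr (by omega)))]
      rwa [hsum1] at h1
    refine ⟨q, ⟨hqnn, hhs⟩, fun k hk => by rw [hqdef]; simp [Nat.not_le.mpr hk, if_neg], ?_⟩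
    intro s
    rw [apgf_formula hInt s]
    exact Finset.sum_congr rfl fun k hk => by rw [hqval k hk]
  · -- part 3
    rintro ⟨hInt, hOdd⟩
    constructor
    · have := integrable_pow_mul hInt (n - 1) 0 (by omega)
      simpa using this
    · intro k hk hodd
      have hk1 : k + 1 ≤ n := by omega
      have e2 : n - k = (n - 1 - k) + 1 := by omega
      have hI1 := integrable_pow_mul hInt (k + 1) (n - 1 - k) (by omega)
      have hI2 := integrable_pow_mul hInt k (n - k) (by omega)
      have hpt : ∀ w : ℝ, w ^ k * (1 - w) ^ (n - 1 - k)
          = w ^ (k + 1) * (1 - w) ^ (n - 1 - k) + w ^ k * (1 - w) ^ (n - k) := by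
        intro w
        rw [e2, pow_succ]
        ring
      calc (0:ℝ) ≤ (∫ w, w ^ (k + 1) * (1 - w) ^ (n - 1 - k) ∂μ)
            + ∫ w, w ^ k * (1 - w) ^ (n - k) ∂μ := by
            apply add_nonneg
            · have e3 : n - 1 - k = n - (k + 1) := by omega
              rw [e3]
              exact hOdd (k + 1) hk1 (by rw [← e3]; exact hodd)
            · apply integral_nonneg_even hae
              rw [e2]; exact hodd.add_one
        _ = ∫ w, (w ^ (k + 1) * (1 - w) ^ (n - 1 - k) + w ^ k * (1 - w) ^ (n - k)) ∂μ :=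
            (MeasureTheory.integral_add hI1 hI2).symm
        _ = ∫ w, w ^ k * (1 - w) ^ (n - 1 - k) ∂μ := by
            apply integral_congr_ae
            filter_upwards with w
            exact (hpt w).symm

end StmtNineteenAux
end
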